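/- Let r ≥ 2 and set q(r) = r²/(4(r − 1)). Then: (i) for every Pigou instance G_P(a, n) and every WCC equilibrium x ∈ [0, n] of G_P(a, n) with uncertainty r, SC(x) ≤ q(r)·min_{y∈[0,n]} SC(y); and (ii) there exist a > 0, n > 0 and a WCC equilibrium x of G_P(a, n) with uncertainty r such that SC(x) = q(r)·min_{y∈[0,n]} SC(y). In particular, the worst-case price of anarchy over Pigou instances for WCC players with uncertainty r ≥ 2 equals r²/(4(r − 1)). -/
import Mathlib


/-- Social cost in the Pigou instance `G_P(a,n)`: a mass `x ∈ [0,n]` uses resource 2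
(with cost `c₂(t) = a·t`) and a mass `n − x` uses resource 1 (with `c₁(t) = 1`), so
`SC(x) = (n − x) + a·x²`. -/
noncomputable def pigouSC (a n x : ℝ) : ℝ := (n - x) + a * x ^ 2

/-- Worst-case regret of resource 1 in `G_P(a,n)` under uncertainty `r`. -/
noncomputable def pigouWCR1 (a r x : ℝ) : ℝ := 1 - a * x / r

/-- Worst-case regret of resource 2 in `G_P(a,n)` under uncertainty `r`. -/
noncomputable def pigouWCR2 (a r x : ℝ) : ℝ := a * r * x - 1

/-- `x ∈ [0,n]` is a WCR equilibrium of `G_P(a,n)` with uncertainty `r` iff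
`(x < n → WCR₁(x) ≤ WCR₂(x))` and `(x > 0 → WCR₂(x) ≤ WCR₁(x))`. -/
def PigouWCREq (a n r x : ℝ) : Prop :=
  (x < n → pigouWCR1 a r x ≤ pigouWCR2 a r x) ∧
  (0 < x → pigouWCR2 a r x ≤ pigouWCR1 a r x)

/-- `x ∈ [0,n]` is a WCC equilibrium of `G_P(a,n)` with uncertainty `r` iff
`(x > 0 → a·r·x ≤ 1)` and `(x < n → a·r·x ≥ 1)`. -/
def PigouWCCEq (a n r x : ℝ) : Prop :=
  (0 < x → a * r * x ≤ 1) ∧ (x < n → 1 ≤ a * r * x)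

/-- For `r ≥ 2` and `q(r) = r²/(4(r − 1))`:
(i) every WCC equilibrium of every Pigou instance has social cost at most `q(r)` times the
optimal social cost; (ii) this bound is tight for some Pigou instance and WCC equilibrium.
Hence the worst-case PoA over Pigou instances for WCC players with uncertainty `r ≥ 2`
equals `r²/(4(r − 1))`. -/
theorem stmt_10 (r : ℝ) (hr : 2 ≤ r) :
    (∀ a n x : ℝ, 0 < a → 0 < n → x ∈ Set.Icc 0 n → PigouWCCEq a n r x →
      ∀ y ∈ Set.Icc (0 : ℝ) n,
        pigouSC a n x ≤ r ^ 2 / (4 * (r - 1)) * pigouSC a n y) ∧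
    (∃ a n x : ℝ, 0 < a ∧ 0 < n ∧ x ∈ Set.Icc 0 n ∧ PigouWCCEq a n r x ∧
      ∃ y ∈ Set.Icc (0 : ℝ) n, (∀ z ∈ Set.Icc (0 : ℝ) n, pigouSC a n y ≤ pigouSC a n z) ∧
        pigouSC a n x = r ^ 2 / (4 * (r - 1)) * pigouSC a n y) := by
  have hr0 : (0:ℝ) < r := by linarith
  have hq : (0:ℝ) < 4 * (r - 1) := by linarith
  have hr2 : r ^ 2 ≠ 0 := by positivity
  constructor
  · rintro a n x ha hn ⟨hx0, hxn⟩ ⟨heq1, heq2⟩ y ⟨hy0, hyn⟩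
    rw [pigouSC, pigouSC, div_mul_eq_mul_div, le_div_iff₀ hq]
    rcases lt_or_eq_of_le hxn with hlt | heqn
    · have h2 := heq2 hlt
      have hx0' : 0 < x := by
        rcases lt_or_eq_of_le hx0 with h | h
        · exact h
        · exfalso; rw [← h] at h2; simp at h2; linarith
      have harx : a * r * x = 1 := le_antisymm (heq1 hx0') h2
      have key : a * r ^ 2 * (r ^ 2 * (n - y + a * y ^ 2) - (n - x + a * x ^ 2) * (4 * (r - 1)))
          = a * r ^ 2 * (r - 2) ^ 2 * (n - y) + (a * r ^ 2 * y - 2 * (r - 1)) ^ 2 := by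
        linear_combination (4 * (r - 1) * (r - a * r * x - 1)) * harx
      have pos : 0 ≤ a * r ^ 2 * (r - 2) ^ 2 * (n - y) + (a * r ^ 2 * y - 2 * (r - 1)) ^ 2 := by
        have h1 : 0 ≤ a * r ^ 2 * (r - 2) ^ 2 * (n - y) := by
          apply mul_nonneg (by positivity) (by linarith)
        nlinarith [sq_nonneg (a * r ^ 2 * y - 2 * (r - 1))]
      nlinarith [key, pos, mul_pos (mul_pos ha hr0) hr0, sq_nonneg r]
    · subst heqn
      have h1 := heq1 hn
      have hay : a * r * y ≤ 1 :=
        le_trans (mul_le_mul_of_nonneg_left hyn (le_of_lt (mul_pos ha hr0))) h1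
      have key : 0 ≤ (x - y) * (r - a * r * x - a * r * y) := by
        apply mul_nonneg (by linarith) (by linarith)
      nlinarith [mul_nonneg key hr0.le, sq_nonneg (r - 2), mul_pos ha (mul_pos hn hn),
        mul_nonneg (mul_nonneg (sq_nonneg (r - 2)) ha.le) (sq_nonneg x)]
  · have hrn : r ≠ 0 := ne_of_gt hr0
    have hr1 : r - 1 ≠ 0 := by intro h; linarith [sub_eq_zero.mp h]
    have hr1' : (0:ℝ) < r - 1 := by linarith
    refine ⟨1, 2 * (r - 1) / r ^ 2, 1 / r, one_pos, by positivity, ⟨by positivity, ?_⟩,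
      ⟨?_, ?_⟩, 2 * (r - 1) / r ^ 2, ⟨by positivity, le_refl _⟩, ?_, ?_⟩
    · rw [div_le_div_iff₀ hr0 (by positivity)]
      nlinarith
    · intro _
      rw [one_mul, mul_one_div_cancel hrn]
    · intro _
      rw [one_mul, mul_one_div_cancel hrn]
    · rintro z ⟨hz0, hzn⟩
      have hn2 : 2 * (r - 1) / r ^ 2 ≤ 1 / 2 := by
        rw [div_le_div_iff₀ (by positivity) two_pos]
        nlinarith [sq_nonneg (r - 2)]
      unfold pigouSC
      nlinarith [mul_nonneg (sub_nonneg.2 hzn)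
        (by linarith : (0:ℝ) ≤ 1 - (2 * (r - 1) / r ^ 2 + z))]
    · unfold pigouSC
      field_simp
      ring
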